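/- Let g be a 2-step nilpotent Lie algebra with abelian complex structure whose (1,0)-part of the center is spanned by a single W (one-dimensional complex center over the complexification in the relevant sense), with structural constants E_{kj} (Greek index dropped). Suppose that for all j,k,l,m the relation E_{km}·conj(E_{lj}) = E_{jl}·conj(E_{mk}) holds. Then |E_{km}| = |E_{mk}| for all k, m, and if not all E_{km} vanish, there exists a real number θ such that e^{iθ} E_{jl} = conj(E_{lj}) for every pair (j,l). -/

import Mathlib

open Complex

/-- For a 2-step nilpotent Lie algebra with abelian complex structure and
1-dimensional center (structural constants `E_{kj}`, Greek index dropped), the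
consequence `E_{km}·conj(E_{lj}) = E_{jl}·conj(E_{mk})` of Condition A implies
`|E_{km}| = |E_{mk}|` for all `k, m`, and if not all `E_{km}` vanish, there is
a real `θ` with `e^{iθ} E_{jl} = conj (E_{lj})` for every pair `(j,l)`. -/
theorem one_dim_center_symmetry {n : ℕ} (E : Fin n → Fin n → ℂ)
    (h : ∀ j k l m, E k m * (starRingEnd ℂ) (E l j)
        = E j l * (starRingEnd ℂ) (E m k)) :
    (∀ k m, ‖E k m‖ = ‖E m k‖) ∧
    ((∃ k m, E k m ≠ 0) → ∃ θ : ℝ,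
      ∀ j l, Complex.exp (θ * Complex.I) * E j l = (starRingEnd ℂ) (E l j)) := by
  have habs : ∀ k m, ‖E k m‖ = ‖E m k‖ := by
    intro k m
    have := h m k k m
    have h2 : ‖E k m‖ ^ 2 = ‖E m k‖ ^ 2 := by
      have := congrArg (‖·‖) this
      simpa [norm_mul, Complex.norm_conj, sq] using this
    nlinarith [norm_nonneg (E k m), norm_nonneg (E m k)]
  refine ⟨habs, ?_⟩
  rintro ⟨k₀, m₀, hne⟩
  set z : ℂ := (starRingEnd ℂ) (E m₀ k₀) / E k₀ m₀ with hz
  have habsz : ‖z‖ = 1 := by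
    rw [hz, norm_div, Complex.norm_conj, ← habs k₀ m₀, div_self]
    simpa using hne
  obtain ⟨θ, hθ⟩ := (Complex.norm_eq_one_iff z).mp habsz
  refine ⟨θ, fun j l => ?_⟩
  rw [hθ, hz]
  have key := h j k₀ l m₀
  field_simp
  rw [mul_comm (_ : ℂ)]
  linear_combination -key
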